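/- Let p be a prime with p ≥ 5 and let G be a finite supersolvable group that is a quotient of the von Dyck group D(p,p,p). Then every prime q dividing |G| satisfies q = p or q ≡ 1 (mod p). -/

import Mathlib

/-- The von Dyck group `D(a,b,c) = ⟨x, y ∣ x^a = y^b = (xy)^c = 1⟩`. -/
def dyckRels (a b c : ℕ) : Set (FreeGroup (Fin 2)) :=
  {FreeGroup.of 0 ^ a, FreeGroup.of 1 ^ b, (FreeGroup.of 0 * FreeGroup.of 1) ^ c}

abbrev DyckGroup (a b c : ℕ) : Type := PresentedGroup (dyckRels a b c)

/-- A group is supersolvable if it has a finite chain of subgroups, each normal in the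
whole group, with cyclic successive quotients (`H (i+1) / H i` is cyclic iff
`H (i+1) = H i ⊔ ⟨x⟩` for some `x ∈ H (i+1)`). -/
def IsSupersolvable (G : Type*) [Group G] : Prop :=
  ∃ (n : ℕ) (H : ℕ → Subgroup G),
    H 0 = ⊥ ∧ H n = ⊤ ∧ (∀ i, (H i).Normal) ∧
    ∀ i < n, H i ≤ H (i + 1) ∧
      ∃ x ∈ H (i + 1), H (i + 1) = H i ⊔ Subgroup.closure {x}

/-- Supersolvability passes to quotients (images under surjective homomorphisms). -/
lemma IsSupersolvable.of_surjective {G H : Type*} [Group G] [Group H] (f : G →* H)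
    (hf : Function.Surjective f) (h : IsSupersolvable G) : IsSupersolvable H := by
  obtain ⟨n, C, h0, hn, hnorm, hstep⟩ := h
  refine ⟨n, fun i => (C i).map f, ?_, ?_, fun i => (hnorm i).map f hf, ?_⟩
  · show Subgroup.map f (C 0) = ⊥
    rw [h0, Subgroup.map_bot]
  · show Subgroup.map f (C n) = ⊤
    rw [hn, Subgroup.map_top_of_surjective f hf]
  · intro i hi
    obtain ⟨hle, x, hx, hEq⟩ := hstep i hi
    exact ⟨Subgroup.map_mono hle, f x, Subgroup.mem_map_of_mem f hx, by
      show Subgroup.map f (C (i + 1)) = Subgroup.map f (C i) ⊔ Subgroup.closure {f x}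
      rw [hEq, Subgroup.map_sup, MonoidHom.map_closure, Set.image_singleton]⟩

/-- A nontrivial finite supersolvable group has a normal cyclic subgroup of prime order. -/
lemma IsSupersolvable.exists_normal_zpowers {G : Type*} [Group G] [Finite G]
    (h : IsSupersolvable G) [Nontrivial G] :
    ∃ z : G, (orderOf z).Prime ∧ (Subgroup.zpowers z).Normal := by
  obtain ⟨n, C, h0, hn, hnorm, hstep⟩ := h
  have htb : (⊤ : Subgroup G) ≠ ⊥ := by
    obtain ⟨a, ha⟩ := exists_ne (1 : G)
    intro hh
    exact ha (Subgroup.mem_bot.mp (hh ▸ Subgroup.mem_top a))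
  have hne : ∃ i, C i ≠ ⊥ := ⟨n, by rw [hn]; exact htb⟩
  classical
  set i := Nat.find hne with hidef
  have hi : C i ≠ ⊥ := Nat.find_spec hne
  have hi0 : i ≠ 0 := fun hh => hi (by rw [hh, h0])
  have hilen : i ≤ n := Nat.find_min' hne (by rw [hn]; exact htb)
  have hnn : n ≠ 0 := fun hh => by omega
  have hprev : C (i - 1) = ⊥ := by
    by_contra hh
    exact Nat.find_min hne (by omega : i - 1 < i) hh
  have hilt : i - 1 < n := by omega
  obtain ⟨hle, x, hx, hEq⟩ := hstep (i - 1) hilt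
  have hieq : i - 1 + 1 = i := by omega
  rw [hieq] at hx hEq
  rw [hprev, bot_sup_eq, ← Subgroup.zpowers_eq_closure] at hEq
  have hx1 : x ≠ 1 := by
    intro hh
    apply hi
    rw [hEq, hh, Subgroup.zpowers_one_eq_bot]
  have hordpos : 0 < orderOf x := orderOf_pos x
  have hord1 : orderOf x ≠ 1 := fun hh => hx1 (orderOf_eq_one_iff.mp hh)
  obtain ⟨r, hr, hrdvd⟩ := Nat.exists_prime_and_dvd hord1
  set k := orderOf x / r with hkdef
  have hkdvd : k ∣ orderOf x := Nat.div_dvd_of_dvd hrdvd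
  refine ⟨x ^ k, ?_, ?_⟩
  · rw [orderOf_pow, Nat.gcd_eq_right hkdvd, hkdef, Nat.div_div_self hrdvd (by omega)]
    exact hr
  · constructor
    intro m hm g
    obtain ⟨j, hj⟩ := Subgroup.mem_zpowers_iff.mp hm
    have hxmem : g * x * g⁻¹ ∈ C i := (hnorm i).conj_mem x hx g
    rw [hEq] at hxmem
    obtain ⟨t, ht⟩ := Subgroup.mem_zpowers_iff.mp hxmem
    have hcmp : (x ^ t) ^ k = (x ^ k) ^ t := by
      rw [← zpow_natCast (x ^ t) k, ← zpow_natCast x k, ← zpow_mul, ← zpow_mul, mul_comm]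
    have : g * m * g⁻¹ = ((x ^ k) ^ t) ^ j := by
      rw [← hj, ← hcmp, ht, conj_pow, conj_zpow]
    rw [this]
    exact Subgroup.zpow_mem _ (Subgroup.zpow_mem _ (Subgroup.mem_zpowers _) t) j

/-- Main auxiliary lemma, by strong induction on the order of the group: a finite
supersolvable group generated by elements of order dividing a prime `p` has all its
prime divisors equal to `p` or congruent to `1` mod `p`. -/
lemma supersolvable_aux (p : ℕ) (hp : p.Prime) :
    ∀ n : ℕ, ∀ (G : Type u) [Group G] [Finite G], Nat.card G ≤ n → IsSupersolvable G →
      (∃ S : Set G, Subgroup.closure S = ⊤ ∧ ∀ s ∈ S, s ^ p = 1) →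
      ∀ q : ℕ, q.Prime → q ∣ Nat.card G → q = p ∨ p ∣ q - 1 := by
  intro n
  induction n with
  | zero =>
    intro G _ _ hcard
    have := Nat.card_pos (α := G)
    omega
  | succ n IH =>
    intro G _ _ hcard hss hgen q hq hqdvd
    obtain ⟨S, hScl, hSp⟩ := hgen
    by_cases htriv : Nat.card G = 1
    · rw [htriv, Nat.dvd_one] at hqdvd
      exact absurd hqdvd hq.ne_one
    · haveI : Nontrivial G := Finite.one_lt_card_iff_nontrivial.mp
        (by have := Nat.card_pos (α := G); omega)
      obtain ⟨z, hrprime, hMnorm⟩ := hss.exists_normal_zpowers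
      set r := orderOf z with hrdef
      set M := Subgroup.zpowers z with hMdef
      haveI := hMnorm
      have hcardM : Nat.card M = r := Nat.card_zpowers z
      have hfact : Nat.card G = Nat.card (G ⧸ M) * r := by
        rw [Subgroup.card_eq_card_quotient_mul_card_subgroup M, hcardM]
      have hQpos : 0 < Nat.card (G ⧸ M) := Nat.card_pos
      have hQle : Nat.card (G ⧸ M) ≤ n := by
        have := hrprime.two_le
        nlinarith [hfact, hcard]
      -- the quotient is supersolvable and suitably generated
      have hQss := hss.of_surjective (QuotientGroup.mk' M) (QuotientGroup.mk'_surjective M)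
      have hQgen : ∃ S' : Set (G ⧸ M), Subgroup.closure S' = ⊤ ∧ ∀ s ∈ S', s ^ p = 1 := by
        refine ⟨(QuotientGroup.mk' M) '' S, ?_, ?_⟩
        · rw [← MonoidHom.map_closure, hScl,
            Subgroup.map_top_of_surjective _ (QuotientGroup.mk'_surjective M)]
        · rintro s' ⟨s, hs, rfl⟩
          rw [← map_pow, hSp s hs, map_one]
      have IHQ : ∀ q' : ℕ, q'.Prime → q' ∣ Nat.card (G ⧸ M) → q' = p ∨ p ∣ q' - 1 :=
        IH (G ⧸ M) hQle hQss hQgen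
      -- conclusion for the prime r itself
      have hr : r = p ∨ p ∣ r - 1 := by
        by_cases hcen : ∀ g : G, g * z * g⁻¹ = z
        · -- z is central
          by_cases hrd : r ∣ Nat.card (G ⧸ M)
          · exact IHQ r hrprime hrd
          · -- Schur–Zassenhaus complement
            have hcop : (Nat.card M).Coprime M.index := by
              rw [hcardM]
              exact hrprime.coprime_iff_not_dvd.mpr (by
                have : M.index = Nat.card (G ⧸ M) := rfl
                rw [this]; exact hrd)
            obtain ⟨K, hK⟩ := Subgroup.exists_right_complement'_of_coprime hcop
            haveI : K.Normal := by
              constructor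
              intro a ha g
              obtain ⟨⟨⟨m, hm⟩, ⟨b, hb⟩⟩, hprod, -⟩ := hK.existsUnique g
              simp only at hprod
              obtain ⟨t, ht⟩ := Subgroup.mem_zpowers_iff.mp hm
              have hmc : ∀ w : G, m * w = w * m := by
                intro w
                rw [← ht]
                have h1 : w * z ^ t * w⁻¹ = z ^ t := by rw [← conj_zpow, hcen w]
                calc z ^ t * w = (w * z ^ t * w⁻¹) * w := by rw [h1]
                  _ = w * z ^ t := by group
              have : g * a * g⁻¹ = b * a * b⁻¹ := by
                rw [← hprod]
                calc m * b * a * (m * b)⁻¹ = m * (b * a * b⁻¹) * m⁻¹ := by group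
                  _ = (b * a * b⁻¹) * m * m⁻¹ := by rw [hmc (b * a * b⁻¹)]
                  _ = b * a * b⁻¹ := by group
              rw [this]
              exact K.mul_mem (K.mul_mem hb ha) (K.inv_mem hb)
            have hKidx : Nat.card (G ⧸ K) = r := by
              have : K.index = Nat.card M := hK.index_eq_card
              rw [← hcardM]
              exact this
            haveI : Nontrivial (G ⧸ K) :=
              Finite.one_lt_card_iff_nontrivial.mp (by rw [hKidx]; exact hrprime.one_lt)
            have hex : ∃ s ∈ S, (QuotientGroup.mk' K) s ≠ 1 := by
              by_contra hall
              push_neg at hall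
              have hmap : Subgroup.closure ((QuotientGroup.mk' K) '' S) = ⊤ := by
                rw [← MonoidHom.map_closure, hScl,
                  Subgroup.map_top_of_surjective _ (QuotientGroup.mk'_surjective K)]
              have hbot : Subgroup.closure ((QuotientGroup.mk' K) '' S) ≤ ⊥ := by
                rw [Subgroup.closure_le]
                rintro s' ⟨s, hs, rfl⟩
                exact Subgroup.mem_bot.mpr (hall s hs)
              rw [hmap] at hbot
              obtain ⟨a, ha⟩ := exists_ne (1 : G ⧸ K)
              exact ha (Subgroup.mem_bot.mp (hbot (Subgroup.mem_top a)))
            obtain ⟨s, hs, hsne⟩ := hex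
            have h1 : (QuotientGroup.mk' K s) ^ p = 1 := by
              rw [← map_pow, hSp s hs, map_one]
            have hdvdp : orderOf (QuotientGroup.mk' K s) ∣ p := orderOf_dvd_of_pow_eq_one h1
            have hop : orderOf (QuotientGroup.mk' K s) = p := by
              rcases (Nat.dvd_prime hp).mp hdvdp with h | h
              · exact absurd (orderOf_eq_one_iff.mp h) hsne
              · exact h
            have hdvdr : orderOf (QuotientGroup.mk' K s) ∣ Nat.card (G ⧸ K) :=
              orderOf_dvd_natCard _
            rw [hop, hKidx] at hdvdr
            exact Or.inl ((Nat.prime_dvd_prime_iff_eq hp hrprime).mp hdvdr).symm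
        · -- z is not central: build the conjugation character G → ZMod r
          push_neg at hcen
          obtain ⟨g₀, hg₀⟩ := hcen
          right
          haveI : Fact r.Prime := ⟨hrprime⟩
          haveI : Fact (1 < r) := ⟨hrprime.one_lt⟩
          have hconj : ∀ g : G, ∃ t : ℤ, z ^ t = g * z * g⁻¹ := fun g =>
            Subgroup.mem_zpowers_iff.mp (hMnorm.conj_mem z (Subgroup.mem_zpowers z) g)
          classical
          set e : G → ZMod r := fun g => (((hconj g).choose : ℤ) : ZMod r) with hedef
          have key : ∀ a b : ℤ, z ^ a = z ^ b ↔ ((a : ZMod r) = (b : ZMod r)) := by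
            intro a b
            rw [ZMod.intCast_eq_intCast_iff, Int.modEq_iff_dvd]
            constructor
            · intro hz
              have : z ^ (b - a) = 1 := by
                rw [zpow_sub, hz, mul_inv_cancel]
              exact orderOf_dvd_iff_zpow_eq_one.mpr this
            · intro hd
              have : z ^ (b - a) = 1 := orderOf_dvd_iff_zpow_eq_one.mp hd
              rw [zpow_sub] at this
              have := mul_inv_eq_one.mp this
              exact this.symm
          have spec : ∀ g : G, z ^ (((e g).val : ℤ)) = g * z * g⁻¹ := by
            intro g
            have h1 := (hconj g).choose_spec
            have h2 : ((((e g).val : ℤ)) : ZMod r) = (((hconj g).choose : ℤ) : ZMod r) := by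
              push_cast
              rw [hedef]
              simp [ZMod.natCast_val, ZMod.cast_id]
            rw [← h1]
            exact (key _ _).mpr h2
          have hmul : ∀ g h : G, e (g * h) = e g * e h := by
            intro g h
            have hz : z ^ (((e (g * h)).val : ℤ)) = z ^ ((((e g).val : ℤ)) * (((e h).val : ℤ))) := by
              rw [spec (g * h)]
              calc g * h * z * (g * h)⁻¹ = g * (h * z * h⁻¹) * g⁻¹ := by group
                _ = g * z ^ (((e h).val : ℤ)) * g⁻¹ := by rw [spec h]
                _ = (g * z * g⁻¹) ^ (((e h).val : ℤ)) := by rw [conj_zpow]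
                _ = (z ^ (((e g).val : ℤ))) ^ (((e h).val : ℤ)) := by rw [spec g]
                _ = z ^ ((((e g).val : ℤ)) * (((e h).val : ℤ))) := by rw [zpow_mul]
            have := (key _ _).mp hz
            push_cast [ZMod.natCast_val, ZMod.cast_id] at this
            exact this
          have hone : e 1 = 1 := by
            have hz : z ^ (((e 1).val : ℤ)) = z ^ (1 : ℤ) := by
              rw [spec 1]; group
            have := (key _ _).mp hz
            push_cast [ZMod.natCast_val, ZMod.cast_id] at this
            exact this
          -- the set where e = 1 is a subgroup
          have hinv : ∀ g : G, e g = 1 → e g⁻¹ = 1 := by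
            intro g hg
            have : e g⁻¹ * e g = 1 := by rw [← hmul, inv_mul_cancel, hone]
            rwa [hg, mul_one] at this
          have hex : ∃ s ∈ S, e s ≠ 1 := by
            by_contra hall
            push_neg at hall
            set T : Subgroup G :=
              { carrier := {g : G | e g = 1}
                one_mem' := hone
                mul_mem' := fun {a b} ha hb => by
                  simp only [Set.mem_setOf_eq] at *
                  rw [hmul, ha, hb, mul_one]
                inv_mem' := fun {a} ha => hinv a ha } with hTdef
            have hST : Subgroup.closure S ≤ T :=
              (Subgroup.closure_le T).mpr (fun s hs => hall s hs)
            rw [hScl] at hST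
            have hg₀T : e g₀ = 1 := hST (Subgroup.mem_top g₀)
            apply hg₀
            have := spec g₀
            rw [hg₀T] at this
            rw [← this]
            simp [ZMod.val_one]
          obtain ⟨s, hs, hes⟩ := hex
          have hunit : IsUnit (e s) := IsUnit.of_mul_eq_one (e s⁻¹) (by
            rw [← hmul, mul_inv_cancel, hone])
          set u := hunit.unit with hudef
          have huval : (u : ZMod r) = e s := hunit.unit_spec
          have hu1 : u ≠ 1 := by
            intro hh
            apply hes
            rw [← huval, hh, Units.val_one]
          have hesp : (e s) ^ p = 1 := by
            have : ∀ m : ℕ, e (s ^ m) = (e s) ^ m := by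
              intro m
              induction m with
              | zero => simpa using hone
              | succ m ih => rw [pow_succ, pow_succ, hmul, ih]
            rw [← this, hSp s hs, hone]
          have hup : u ^ p = 1 := by
            ext
            push_cast
            rw [huval]
            exact hesp
          have horder : orderOf u = p := by
            rcases (Nat.dvd_prime hp).mp (orderOf_dvd_of_pow_eq_one hup) with h | h
            · exact absurd (orderOf_eq_one_iff.mp h) hu1
            · exact h
          have hdvd : orderOf u ∣ Fintype.card (ZMod r)ˣ := orderOf_dvd_card
          rw [horder, ZMod.card_units_eq_totient, Nat.totient_prime hrprime] at hdvd
          exact hdvd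
      -- finish: q divides (card G⧸M) * r
      rw [hfact] at hqdvd
      rcases (Nat.Prime.dvd_mul hq).mp hqdvd with h | h
      · exact IHQ q hq h
      · rw [(Nat.prime_dvd_prime_iff_eq hq hrprime).mp h]
        exact hr

/-- Proposition 4.4(a): if `p ≥ 5` is prime and `G` is a finite supersolvable quotient of
the von Dyck group `D(p,p,p)`, then every prime `q` dividing `|G|` satisfies `q = p` or
`q ≡ 1 (mod p)`. -/
theorem supersolvable_dyck_ppp_prime_divisors (p : ℕ) (hp : p.Prime) (hp5 : 5 ≤ p)
    (G : Type*) [Group G] [Finite G] (hss : IsSupersolvable G)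
    (f : DyckGroup p p p →* G) (hf : Function.Surjective f) :
    ∀ q : ℕ, q.Prime → q ∣ Nat.card G → q = p ∨ q ≡ 1 [MOD p] := by
  intro q hq hqdvd
  -- the generators of the Dyck group have p-th power 1
  have hrel : ∀ i : Fin 2, (PresentedGroup.of i : DyckGroup p p p) ^ p = 1 := by
    intro i
    have hmem : ∀ w ∈ dyckRels p p p, (QuotientGroup.mk w : DyckGroup p p p) = 1 := fun w hw =>
      (QuotientGroup.eq_one_iff w).mpr (Subgroup.subset_normalClosure hw)
    fin_cases i
    · have := hmem (FreeGroup.of 0 ^ p) (Or.inl rfl)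
      rwa [QuotientGroup.mk_pow] at this
    · have := hmem (FreeGroup.of 1 ^ p) (Or.inr (Or.inl rfl))
      rwa [QuotientGroup.mk_pow] at this
  have hgen : ∃ S : Set G, Subgroup.closure S = ⊤ ∧ ∀ s ∈ S, s ^ p = 1 := by
    refine ⟨f '' Set.range (PresentedGroup.of (rels := dyckRels p p p)), ?_, ?_⟩
    · rw [← MonoidHom.map_closure, PresentedGroup.closure_range_of,
        Subgroup.map_top_of_surjective f hf]
    · rintro s ⟨x, ⟨i, rfl⟩, rfl⟩
      rw [← map_pow, hrel i, map_one]
  rcases supersolvable_aux p hp (Nat.card G) G le_rfl hss hgen q hq hqdvd with h | h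
  · exact Or.inl h
  · exact Or.inr ((Nat.modEq_iff_dvd' (le_of_lt hq.one_lt)).mpr h).symm
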